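/- Fix λ ∈ ℝ^n and an index i. Let F^1, …, F^n and G^i be continuous CDFs on [0, x̄] with sup_x |F^i(x) − G^i(x)| ≤ Δ, and let F = F^1 ⊗ … ⊗ F^n and G be the product distribution obtained from F by replacing the i-th marginal F^i with G^i. Then Σ_j ( p_j(F, λ) − p_j(G, λ) )^+ = Σ_j ( p_j(G, λ) − p_j(F, λ) )^+ ≤ Δ, where (a)^+ = max(a, 0). -/

import Mathlib

open MeasureTheory ProbabilityTheory Real
open scoped ENNReal NNReal

noncomputable section

/-- CDF of a measure on `ℝ`. -/
def mcdf (μ : Measure ℝ) (x : ℝ) : ℝ := (μ (Set.Iic x)).toReal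

/-- The Laguerre cell `L_i(λ) = {x ∈ [0,x̄]^n : x_i + λ_i > x_j + λ_j ∀ j ≠ i}`. -/
def laguerre {n : ℕ} (xbar : ℝ) (lam : Fin n → ℝ) (i : Fin n) : Set (Fin n → ℝ) :=
  {x | (∀ j, x j ∈ Set.Icc (0 : ℝ) xbar) ∧ ∀ j, j ≠ i → x j + lam j < x i + lam i}

/-- `p_j(𝐅, λ) = P_{X∼𝐅}(X ∈ L_j(λ))`. -/
def pAlloc {n : ℕ} (xbar : ℝ) (μ : Measure (Fin n → ℝ)) (lam : Fin n → ℝ) (j : Fin n) : ℝ :=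
  (μ (laguerre xbar lam j)).toReal



lemma mcdf_nonneg (μ : Measure ℝ) (x : ℝ) : 0 ≤ mcdf μ x := ENNReal.toReal_nonneg

lemma measure_Iic_eq (μ : Measure ℝ) [IsProbabilityMeasure μ] (x : ℝ) :
    μ (Set.Iic x) = ENNReal.ofReal (mcdf μ x) :=
  (ENNReal.ofReal_toReal (measure_ne_top μ _)).symm

lemma atomless_of_cont (μ : Measure ℝ) [IsProbabilityMeasure μ]
    (h : Continuous (mcdf μ)) (a : ℝ) : μ {a} = 0 := by
  refine le_antisymm ?_ zero_le
  refine ENNReal.le_of_forall_pos_le_add (fun ε hε _ => ?_)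
  rw [zero_add]
  obtain ⟨δ, hδ, hd⟩ := Metric.continuousAt_iff.mp (h.continuousAt (x := a)) ε (by exact_mod_cast hε)
  have hlt : dist (a - δ/2) a < δ := by
    rw [Real.dist_eq]; rw [abs_of_nonpos (by linarith)]; linarith
  have hc := hd hlt
  rw [Real.dist_eq] at hc
  have hsub : ({a} : Set ℝ) ⊆ Set.Iic a \ Set.Iic (a - δ/2) := by
    intro x hx
    rcases hx with rfl
    constructor
    · exact Set.mem_Iic.mpr le_rfl
    · simp only [Set.mem_Iic, not_le]; linarith
  calc μ {a} ≤ μ (Set.Iic a \ Set.Iic (a - δ/2)) := measure_mono hsub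
    _ = μ (Set.Iic a) - μ (Set.Iic (a - δ/2)) := by
        refine measure_diff ?_ measurableSet_Iic.nullMeasurableSet (measure_ne_top μ _)
        exact Set.Iic_subset_Iic.mpr (by linarith)
    _ = ENNReal.ofReal (mcdf μ a) - ENNReal.ofReal (mcdf μ (a - δ/2)) := by
        rw [measure_Iic_eq, measure_Iic_eq]
    _ = ENNReal.ofReal (mcdf μ a - mcdf μ (a - δ/2)) := (ENNReal.ofReal_sub _ (mcdf_nonneg _ _)).symm
    _ ≤ ENNReal.ofReal ε := by
        apply ENNReal.ofReal_le_ofReal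
        have := abs_lt.mp hc
        linarith [this.1, this.2]
    _ = (ε : ℝ≥0∞) := ENNReal.ofReal_coe_nnreal


lemma mcdf_le_one (μ : Measure ℝ) [IsProbabilityMeasure μ] (x : ℝ) : mcdf μ x ≤ 1 := by
  rw [mcdf, ← ENNReal.toReal_one]
  exact ENNReal.toReal_mono ENNReal.one_ne_top prob_le_one

variable {xbar Δ : ℝ}

lemma meas_inter_cube (μ : Measure ℝ) [IsProbabilityMeasure μ]
    (hμ : μ (Set.Icc (0:ℝ) xbar) = 1) (s : Set ℝ) :
    μ (Set.Icc (0:ℝ) xbar ∩ s) = μ s := by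
  rw [Set.inter_comm]
  exact measure_inter_conull (by rwa [prob_compl_eq_zero_iff measurableSet_Icc])

lemma meas_cube_Iio (μ : Measure ℝ) [IsProbabilityMeasure μ] [NullSingletonClass μ]
    (hμ : μ (Set.Icc (0:ℝ) xbar) = 1) (c : ℝ) :
    μ (Set.Icc (0:ℝ) xbar ∩ Set.Iio c) = ENNReal.ofReal (mcdf μ c) := by
  rw [meas_inter_cube μ hμ, ← measure_Iic_eq]
  exact measure_congr Iio_ae_eq_Iic

lemma meas_cube_Ioi (μ : Measure ℝ) [IsProbabilityMeasure μ]
    (hμ : μ (Set.Icc (0:ℝ) xbar) = 1) (c : ℝ) :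
    μ (Set.Icc (0:ℝ) xbar ∩ Set.Ioi c) = 1 - ENNReal.ofReal (mcdf μ c) := by
  rw [meas_inter_cube μ hμ, ← measure_Iic_eq, ← Set.compl_Iic,
    measure_compl measurableSet_Iic (measure_ne_top μ _), measure_univ]

lemma meas_cube_diff (μ : Measure ℝ) [IsProbabilityMeasure μ] [NullSingletonClass μ]
    (hμ : μ (Set.Icc (0:ℝ) xbar) = 1) (c : ℝ) :
    μ (Set.Icc (0:ℝ) xbar \ {c}) = 1 := by
  rw [measure_diff_null (measure_singleton c), hμ]

section Good
variable (μ ν : Measure ℝ) [IsProbabilityMeasure μ] [IsProbabilityMeasure ν]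
  [NullSingletonClass μ] [NullSingletonClass ν]
  (hμ : μ (Set.Icc (0:ℝ) xbar) = 1) (hν : ν (Set.Icc (0:ℝ) xbar) = 1)
include hμ hν

lemma good_cube (hΔ : 0 ≤ Δ) :
    μ (Set.Icc (0:ℝ) xbar) ≤ ν (Set.Icc (0:ℝ) xbar) + ENNReal.ofReal Δ := by
  rw [hμ, hν]; exact le_self_add

lemma good_Iio (hΔ : 0 ≤ Δ) {c : ℝ} (hc : mcdf μ c ≤ mcdf ν c + Δ) :
    μ (Set.Icc (0:ℝ) xbar ∩ Set.Iio c) ≤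
      ν (Set.Icc (0:ℝ) xbar ∩ Set.Iio c) + ENNReal.ofReal Δ := by
  rw [meas_cube_Iio μ hμ, meas_cube_Iio ν hν,
    ← ENNReal.ofReal_add (mcdf_nonneg ν c) hΔ]
  exact ENNReal.ofReal_le_ofReal hc

lemma good_Ioi (hΔ : 0 ≤ Δ) {c : ℝ} (hc : mcdf ν c ≤ mcdf μ c + Δ) :
    μ (Set.Icc (0:ℝ) xbar ∩ Set.Ioi c) ≤
      ν (Set.Icc (0:ℝ) xbar ∩ Set.Ioi c) + ENNReal.ofReal Δ := by
  rw [meas_cube_Ioi μ hμ, meas_cube_Ioi ν hν]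
  rw [tsub_le_iff_right]
  have hb : ENNReal.ofReal (mcdf ν c) ≤ 1 := by
    rw [← ENNReal.ofReal_one]; exact ENNReal.ofReal_le_ofReal (mcdf_le_one ν c)
  calc (1:ℝ≥0∞) = (1 - ENNReal.ofReal (mcdf ν c)) + ENNReal.ofReal (mcdf ν c) := by
        rw [tsub_add_cancel_of_le hb]
    _ ≤ (1 - ENNReal.ofReal (mcdf ν c)) + (ENNReal.ofReal (mcdf μ c) + ENNReal.ofReal Δ) := by
        gcongr
        rw [← ENNReal.ofReal_add (mcdf_nonneg μ c) hΔ]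
        exact ENNReal.ofReal_le_ofReal hc
    _ = 1 - ENNReal.ofReal (mcdf ν c) + ENNReal.ofReal Δ + ENNReal.ofReal (mcdf μ c) := by ring

lemma good_diff (hΔ : 0 ≤ Δ) (c : ℝ) :
    μ (Set.Icc (0:ℝ) xbar \ {c}) ≤
      ν (Set.Icc (0:ℝ) xbar \ {c}) + ENNReal.ofReal Δ := by
  rw [meas_cube_diff μ hμ, meas_cube_diff ν hν]; exact le_self_add

end Good



lemma pi_apply_split {n : ℕ} (μ : Fin n → Measure ℝ) [∀ j, IsProbabilityMeasure (μ j)]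
    (i : Fin n) (U : Set (Fin n → ℝ)) (hU : MeasurableSet U) :
    Measure.pi μ U =
      ∫⁻ y : {j : Fin n // j ≠ i} → ℝ,
        (μ i) {t : ℝ | (fun j => if h : j ≠ i then y ⟨j, h⟩ else t) ∈ U}
        ∂(Measure.pi fun j : {j : Fin n // j ≠ i} => μ (j : Fin n)) := by
  classical
  haveI : Unique {j : Fin n // ¬ j ≠ i} :=
    ⟨⟨⟨i, by simp⟩⟩, fun j => Subtype.ext (not_not.mp j.2)⟩
  set e := MeasurableEquiv.piEquivPiSubtypeProd (fun _ : Fin n => ℝ) (fun j => j ≠ i) with he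
  have hmp := measurePreserving_piEquivPiSubtypeProd μ (fun j => j ≠ i)
  have h1 : Measure.pi μ U =
      ((Measure.pi fun j : {j : Fin n // j ≠ i} => μ (j : Fin n)).prod
        (Measure.pi fun j : {j : Fin n // ¬ j ≠ i} => μ (j : Fin n))) (e.symm ⁻¹' U) := by
    rw [← hmp.map_eq, MeasurableEquiv.map_apply]
    have hUU : (⇑e ⁻¹' (⇑e.symm ⁻¹' U)) = U := by
      ext x; simp only [Set.mem_preimage, MeasurableEquiv.symm_apply_apply]
    rw [hUU]
  rw [h1, Measure.prod_apply (e.symm.measurable hU)]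
  have hfun : (fun j : {j : Fin n // ¬ j ≠ i} => μ (j : Fin n)) = fun _ => μ i := by
    funext j
    rw [not_not.mp j.2]
  rw [hfun]
  have hmp2 := measurePreserving_funUnique (μ i) {j : Fin n // ¬ j ≠ i}
  set u := MeasurableEquiv.funUnique {j : Fin n // ¬ j ≠ i} ℝ with hu
  have h2 : ∀ T : Set ({j : Fin n // ¬ j ≠ i} → ℝ),
      (Measure.pi fun _ : {j : Fin n // ¬ j ≠ i} => μ i) T = μ i (u.symm ⁻¹' T) := by
    intro T
    conv_rhs => rw [← hmp2.map_eq]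
    rw [MeasurableEquiv.map_apply]
    have hTT : (⇑u ⁻¹' (⇑u.symm ⁻¹' T)) = T := by
      ext x; simp
    rw [hTT]
    congr!
  refine lintegral_congr fun y => ?_
  rw [h2]
  congr 1

lemma measurableSet_laguerre {n : ℕ} (xbar : ℝ) (lam : Fin n → ℝ) (i : Fin n) :
    MeasurableSet (laguerre xbar lam i) := by
  have h : laguerre xbar lam i =
      (⋂ j, (fun x : Fin n → ℝ => x j) ⁻¹' Set.Icc (0:ℝ) xbar) ∩
      ⋂ j, ⋂ (_ : j ≠ i), {x : Fin n → ℝ | x j + lam j < x i + lam i} := by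
    ext x
    simp [laguerre, Set.mem_iInter]
  rw [h]
  apply MeasurableSet.inter
  · exact MeasurableSet.iInter fun j => (measurable_pi_apply j) measurableSet_Icc
  · refine MeasurableSet.iInter fun j => MeasurableSet.iInter fun _ => ?_
    exact measurableSet_lt ((measurable_pi_apply j).add_const _)
      ((measurable_pi_apply i).add_const _)

lemma laguerre_disjoint {n : ℕ} (xbar : ℝ) (lam : Fin n → ℝ) :
    Pairwise (Function.onFun Disjoint fun j : Fin n => laguerre xbar lam j) := by
  intro j k hjk
  rw [Function.onFun, Set.disjoint_left]
  intro x hxj hxk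
  have h1 := hxj.2 k (Ne.symm hjk)
  have h2 := hxk.2 j hjk
  linarith

lemma tie_null {n : ℕ} (μ : Fin n → Measure ℝ) [∀ j, IsProbabilityMeasure (μ j)]
    (hat : ∀ j a, μ j {a} = 0) (lam : Fin n → ℝ) {j k : Fin n} (hjk : j ≠ k) :
    Measure.pi μ {x : Fin n → ℝ | x j + lam j = x k + lam k} = 0 := by
  have hmeas : MeasurableSet {x : Fin n → ℝ | x j + lam j = x k + lam k} :=
    measurableSet_eq_fun ((measurable_pi_apply j).add_const _)
      ((measurable_pi_apply k).add_const _)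
  rw [pi_apply_split μ j _ hmeas]
  have hsec : ∀ y : {l : Fin n // l ≠ j} → ℝ,
      {t : ℝ | (fun l => if h : l ≠ j then y ⟨l, h⟩ else t) ∈
        {x : Fin n → ℝ | x j + lam j = x k + lam k}} =
      {y ⟨k, hjk.symm⟩ + lam k - lam j} := by
    intro y
    ext t
    simp only [Set.mem_setOf_eq, Set.mem_singleton_iff]
    rw [dif_neg (not_not.mpr rfl), dif_pos hjk.symm]
    constructor <;> intro h <;> linarith
  calc ∫⁻ y, (μ j) {t : ℝ | (fun l => if h : l ≠ j then y ⟨l, h⟩ else t) ∈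
        {x : Fin n → ℝ | x j + lam j = x k + lam k}}
        ∂(Measure.pi fun l : {l : Fin n // l ≠ j} => μ (l : Fin n))
      = ∫⁻ _, 0 ∂(Measure.pi fun l : {l : Fin n // l ≠ j} => μ (l : Fin n)) := by
        refine lintegral_congr fun y => ?_
        rw [hsec y]
        exact hat j _
    _ = 0 := lintegral_zero

lemma pi_cube_one {n : ℕ} (xbar : ℝ) (μ : Fin n → Measure ℝ) [∀ j, IsProbabilityMeasure (μ j)]
    (h : ∀ j, μ j (Set.Icc (0:ℝ) xbar) = 1) :
    Measure.pi μ {x : Fin n → ℝ | ∀ j, x j ∈ Set.Icc (0:ℝ) xbar} = 1 := by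
  have hc : {x : Fin n → ℝ | ∀ j, x j ∈ Set.Icc (0:ℝ) xbar} =
      Set.pi Set.univ (fun _ : Fin n => Set.Icc (0:ℝ) xbar) := by
    ext x
    simp only [Set.mem_setOf_eq, Set.mem_univ_pi]
  rw [hc, Measure.pi_pi]
  simp [h]

lemma pi_union_laguerre {n : ℕ} (xbar : ℝ) (lam : Fin n → ℝ) (i0 : Fin n)
    (μ : Fin n → Measure ℝ) [∀ j, IsProbabilityMeasure (μ j)]
    (hat : ∀ j a, μ j {a} = 0) (hsupp : ∀ j, μ j (Set.Icc (0:ℝ) xbar) = 1) :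
    Measure.pi μ (⋃ j, laguerre xbar lam j) = 1 := by
  refine le_antisymm prob_le_one ?_
  set N : Set (Fin n → ℝ) := ⋃ j, ⋃ k, ⋃ (_ : j ≠ k), {x : Fin n → ℝ | x j + lam j = x k + lam k} with hN
  have hNnull : Measure.pi μ N = 0 := by
    refine measure_iUnion_null fun j => measure_iUnion_null fun k => measure_iUnion_null fun h => ?_
    exact tie_null μ hat lam h
  have hsub : {x : Fin n → ℝ | ∀ j, x j ∈ Set.Icc (0:ℝ) xbar} ⊆ (⋃ j, laguerre xbar lam j) ∪ N := by
    intro x hx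
    obtain ⟨j0, -, hj0⟩ := Finset.exists_max_image Finset.univ (fun j => x j + lam j)
      ⟨i0, Finset.mem_univ i0⟩
    by_cases hvic : ∀ k, k ≠ j0 → x k + lam k < x j0 + lam j0
    · exact Or.inl (Set.mem_iUnion.mpr ⟨j0, ⟨hx, hvic⟩⟩)
    · push_neg at hvic
      obtain ⟨k, hk, hge⟩ := hvic
      have hle := hj0 k (Finset.mem_univ k)
      refine Or.inr ?_
      rw [hN]
      refine Set.mem_iUnion.mpr ⟨k, Set.mem_iUnion.mpr ⟨j0, Set.mem_iUnion.mpr ⟨hk, ?_⟩⟩⟩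
      simp only [Set.mem_setOf_eq]
      linarith
  calc (1:ℝ≥0∞) = Measure.pi μ {x : Fin n → ℝ | ∀ j, x j ∈ Set.Icc (0:ℝ) xbar} :=
        (pi_cube_one xbar μ hsupp).symm
    _ ≤ Measure.pi μ ((⋃ j, laguerre xbar lam j) ∪ N) := measure_mono hsub
    _ ≤ Measure.pi μ (⋃ j, laguerre xbar lam j) + Measure.pi μ N := measure_union_le _ _
    _ = Measure.pi μ (⋃ j, laguerre xbar lam j) := by rw [hNnull, add_zero]

lemma sec_good {n : ℕ} (hΔ : 0 ≤ Δ) (lam : Fin n → ℝ) (i : Fin n)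
    (μ ν : Measure ℝ) [IsProbabilityMeasure μ] [IsProbabilityMeasure ν]
    [NullSingletonClass μ] [NullSingletonClass ν]
    (hμ : μ (Set.Icc (0:ℝ) xbar) = 1) (hν : ν (Set.Icc (0:ℝ) xbar) = 1)
    (hclose : ∀ x, |mcdf μ x - mcdf ν x| ≤ Δ)
    (S : Finset (Fin n)) (y : {j : Fin n // j ≠ i} → ℝ) :
    μ {t : ℝ | (fun j => if h : j ≠ i then y ⟨j, h⟩ else t) ∈ ⋃ j ∈ S, laguerre xbar lam j}
      ≤ ν {t : ℝ | (fun j => if h : j ≠ i then y ⟨j, h⟩ else t) ∈ ⋃ j ∈ S, laguerre xbar lam j}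
        + ENNReal.ofReal Δ := by
  classical
  set xf : ℝ → (Fin n → ℝ) := fun t j => if h : j ≠ i then y ⟨j, h⟩ else t with hxf
  have hxfi : ∀ t, xf t i = t := fun t => dif_neg (not_not.mpr rfl)
  have hxfj : ∀ t (j) (h : j ≠ i), xf t j = y ⟨j, h⟩ := fun t j h => dif_pos h
  set sec : Set ℝ :=
    {t : ℝ | (fun j => if h : j ≠ i then y ⟨j, h⟩ else t) ∈ ⋃ j ∈ S, laguerre xbar lam j}
    with hsec
  have hmem : ∀ t, t ∈ sec ↔ ∃ j ∈ S, xf t ∈ laguerre xbar lam j := by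
    intro t
    rw [hsec]
    simp only [Set.mem_setOf_eq, Set.mem_iUnion, exists_prop]
    exact Iff.rfl
  have hcl : ∀ x, mcdf μ x ≤ mcdf ν x + Δ := fun x => by
    have := abs_le.mp (hclose x); linarith [this.2]
  have hcl' : ∀ x, mcdf ν x ≤ mcdf μ x + Δ := fun x => by
    have := abs_le.mp (hclose x); linarith [(abs_le.mp (hclose x)).1]
  by_cases hy : ∀ (j) (h : j ≠ i), y ⟨j, h⟩ ∈ Set.Icc (0:ℝ) xbar
  · by_cases hdom : ∃ j₀ ∈ S, ∃ h0 : j₀ ≠ i,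
        ∀ (k) (hk : k ≠ i), k ≠ j₀ → y ⟨k, hk⟩ + lam k < y ⟨j₀, h0⟩ + lam j₀
    · obtain ⟨j₀, hj₀S, h0, hd⟩ := hdom
      set c : ℝ := y ⟨j₀, h0⟩ + lam j₀ - lam i with hc
      have hLj₀ : ∀ t, t ∈ Set.Icc (0:ℝ) xbar → t < c → xf t ∈ laguerre xbar lam j₀ := by
        intro t ht htc
        constructor
        · intro j
          by_cases h : j ≠ i
          · rw [hxfj t j h]; exact hy j h
          · rw [not_not.mp h, hxfi]; exact ht
        · intro k hk
          by_cases h : k ≠ i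
          · rw [hxfj t k h, hxfj t j₀ h0]; exact hd k h hk
          · rw [not_not.mp h, hxfi, hxfj t j₀ h0]; rw [hc] at htc; linarith
      have hfwd : ∀ t j, j ∈ S → xf t ∈ laguerre xbar lam j →
          t ∈ Set.Icc (0:ℝ) xbar ∧ (j ≠ i → t < c) ∧ (j = i → c < t) := by
        intro t j hjS hL
        have ht : t ∈ Set.Icc (0:ℝ) xbar := by have := hL.1 i; rwa [hxfi] at this
        refine ⟨ht, ?_, ?_⟩
        · intro hji
          have h1 := hL.2 i (Ne.symm hji)
          rw [hxfi, hxfj t j hji] at h1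
          by_cases hjj0 : j = j₀
          · subst hjj0; rw [hc]; linarith
          · have h2 := hd j hji hjj0
            rw [hc]; linarith
        · intro hji
          subst hji
          have h1 := hL.2 j₀ h0
          rw [hxfi, hxfj t j₀ h0] at h1
          rw [hc]; linarith
      by_cases hiS : i ∈ S
      · have hseq : sec = Set.Icc (0:ℝ) xbar \ {c} := by
          ext t
          rw [hmem]
          constructor
          · rintro ⟨j, hjS, hL⟩
            obtain ⟨ht, h1, h2⟩ := hfwd t j hjS hL
            refine ⟨ht, ?_⟩
            by_cases hji : j = i
            · have := h2 hji; simp only [Set.mem_singleton_iff]; intro h; linarith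
            · have := h1 hji; simp only [Set.mem_singleton_iff]; intro h; linarith
          · rintro ⟨ht, htc⟩
            simp only [Set.mem_singleton_iff] at htc
            rcases lt_or_gt_of_ne htc with h | h
            · exact ⟨j₀, hj₀S, hLj₀ t ht h⟩
            · refine ⟨i, hiS, ?_, ?_⟩
              · intro j
                by_cases hj : j ≠ i
                · rw [hxfj t j hj]; exact hy j hj
                · rw [not_not.mp hj, hxfi]; exact ht
              · intro k hk
                rw [hxfi, hxfj t k hk]
                by_cases hkj0 : k = j₀
                · subst hkj0; rw [hc] at h; linarith
                · have := hd k hk hkj0; rw [hc] at h; linarith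
        rw [hseq]
        exact good_diff μ ν hμ hν hΔ c
      · have hseq : sec = Set.Icc (0:ℝ) xbar ∩ Set.Iio c := by
          ext t
          rw [hmem]
          constructor
          · rintro ⟨j, hjS, hL⟩
            obtain ⟨ht, h1, -⟩ := hfwd t j hjS hL
            have hji : j ≠ i := fun h => hiS (h ▸ hjS)
            exact ⟨ht, h1 hji⟩
          · rintro ⟨ht, htc⟩
            exact ⟨j₀, hj₀S, hLj₀ t ht htc⟩
        rw [hseq]
        exact good_Iio μ ν hμ hν hΔ (hcl c)
    · -- no dominant element of S among indices ≠ i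
      have hnotL : ∀ t j, j ∈ S → j ≠ i → xf t ∉ laguerre xbar lam j := by
        intro t j hjS hji hL
        refine hdom ⟨j, hjS, hji, ?_⟩
        intro k hk hkj
        have := hL.2 k hkj
        rwa [hxfj t k hk, hxfj t j hji] at this
      by_cases hiS : i ∈ S
      · set T : Finset (Fin n) := Finset.univ.erase i with hT
        by_cases hTn : T.Nonempty
        · set g : Fin n → ℝ := fun k => if h : k ≠ i then y ⟨k, h⟩ + lam k else 0 with hg
          set c : ℝ := T.sup' hTn g - lam i with hc
          have hseq : sec = Set.Icc (0:ℝ) xbar ∩ Set.Ioi c := by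
            ext t
            rw [hmem]
            constructor
            · rintro ⟨j, hjS, hL⟩
              have hji : j = i := by
                by_contra hji
                exact hnotL t j hjS hji hL
              rw [hji] at hL
              have ht : t ∈ Set.Icc (0:ℝ) xbar := by have := hL.1 i; rwa [hxfi] at this
              refine ⟨ht, ?_⟩
              rw [Set.mem_Ioi, hc, sub_lt_iff_lt_add]
              rw [Finset.sup'_lt_iff]
              intro k hk
              have hki : k ≠ i := Finset.ne_of_mem_erase hk
              have := hL.2 k hki
              rw [hxfi, hxfj t k hki] at this
              have hgk : g k = y ⟨k, hki⟩ + lam k := dif_pos hki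
              rw [hgk]; linarith
            · rintro ⟨ht, htc⟩
              refine ⟨i, hiS, ?_, ?_⟩
              · intro j
                by_cases hj : j ≠ i
                · rw [hxfj t j hj]; exact hy j hj
                · rw [not_not.mp hj, hxfi]; exact ht
              · intro k hk
                rw [hxfi, hxfj t k hk]
                have hkT : k ∈ T := Finset.mem_erase.mpr ⟨hk, Finset.mem_univ k⟩
                have hle : g k ≤ T.sup' hTn g := Finset.le_sup' g hkT
                have hgk : g k = y ⟨k, hk⟩ + lam k := dif_pos hk
                rw [hgk] at hle
                rw [Set.mem_Ioi, hc] at htc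
                linarith
          rw [hseq]
          exact good_Ioi μ ν hμ hν hΔ (hcl' c)
        · -- no index other than i
          have hall : ∀ k : Fin n, k = i := by
            intro k
            by_contra hk
            exact hTn ⟨k, Finset.mem_erase.mpr ⟨hk, Finset.mem_univ k⟩⟩
          have hseq : sec = Set.Icc (0:ℝ) xbar := by
            ext t
            rw [hmem]
            constructor
            · rintro ⟨j, hjS, hL⟩
              have := hL.1 i; rwa [hxfi] at this
            · intro ht
              refine ⟨i, hiS, ?_, ?_⟩
              · intro j
                rw [hall j, hxfi]; exact ht
              · intro k hk
                exact absurd (hall k) hk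
          rw [hseq]
          exact good_cube μ ν hμ hν hΔ
      · have hseq : sec = ∅ := by
          ext t
          rw [hmem]
          simp only [Set.mem_empty_iff_false, iff_false, not_exists]
          rintro j ⟨hjS, hL⟩
          have hji : j ≠ i := fun h => hiS (h ▸ hjS)
          exact hnotL t j hjS hji hL
        rw [hseq]
        simp only [measure_empty, zero_le]
  · -- some fixed coordinate outside the cube
    push_neg at hy
    obtain ⟨j, hj, hyj⟩ := hy
    have hseq : sec = ∅ := by
      ext t
      rw [hmem]
      simp only [Set.mem_empty_iff_false, iff_false, not_exists]
      rintro k ⟨hkS, hL⟩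
      have := hL.1 j
      rw [hxfj t j hj] at this
      exact hyj this
    rw [hseq]
    simp only [measure_empty, zero_le]

/-- Single-coordinate version: if the product distributions `F = F¹ ⊗ … ⊗ Fⁿ` and `G`
differ only in their `i`-th marginal (`Gᵢ` in place of `Fᵢ`), with continuous marginal CDFs
and `sup_x |Fⁱ(x) − Gⁱ(x)| ≤ Δ`, then for a fixed greedy policy `λ`,
`∑_j (p_j(F,λ) − p_j(G,λ))⁺ = ∑_j (p_j(G,λ) − p_j(F,λ))⁺ ≤ Δ`. -/
theorem allocation_size_closeness_single_coordinate
    {n : ℕ} (xbar Δ : ℝ) (hxbar : 0 < xbar)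
    (lam : Fin n → ℝ) (i : Fin n)
    (Fm Gm : Fin n → Measure ℝ)
    [∀ j, IsProbabilityMeasure (Fm j)] [∀ j, IsProbabilityMeasure (Gm j)]
    (hGeq : ∀ j, j ≠ i → Gm j = Fm j)
    (hFsupp : ∀ j, Fm j (Set.Icc (0 : ℝ) xbar) = 1)
    (hGisupp : Gm i (Set.Icc (0 : ℝ) xbar) = 1)
    (hFcont : ∀ j, Continuous (mcdf (Fm j)))
    (hGicont : Continuous (mcdf (Gm i)))
    (hclose : ∀ x, |mcdf (Fm i) x - mcdf (Gm i) x| ≤ Δ) :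
    (∑ j, max (pAlloc xbar (Measure.pi Fm) lam j - pAlloc xbar (Measure.pi Gm) lam j) 0 =
        ∑ j, max (pAlloc xbar (Measure.pi Gm) lam j - pAlloc xbar (Measure.pi Fm) lam j) 0) ∧
      ∑ j, max (pAlloc xbar (Measure.pi Fm) lam j - pAlloc xbar (Measure.pi Gm) lam j) 0 ≤
        Δ := by
  classical
  have hΔ0 : 0 ≤ Δ := le_trans (abs_nonneg _) (hclose 0)
  haveI hFso : ∀ j, NullSingletonClass (Fm j) := fun j => ⟨atomless_of_cont (Fm j) (hFcont j)⟩
  haveI hGso : ∀ j, NullSingletonClass (Gm j) := by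
    intro j
    by_cases h : j = i
    · subst h; exact ⟨atomless_of_cont (Gm j) hGicont⟩
    · rw [hGeq j h]; exact hFso j
  have hFat : ∀ j a, Fm j {a} = 0 := fun j a => measure_singleton a
  have hGat : ∀ j a, Gm j {a} = 0 := fun j a => measure_singleton a
  have hGsupp : ∀ j, Gm j (Set.Icc (0 : ℝ) xbar) = 1 := by
    intro j
    by_cases h : j = i
    · subst h; exact hGisupp
    · rw [hGeq j h]; exact hFsupp j
  set pF : Fin n → ℝ := pAlloc xbar (Measure.pi Fm) lam with hpF
  set pG : Fin n → ℝ := pAlloc xbar (Measure.pi Gm) lam with hpG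
  -- the total allocation probability is 1 for both
  have hsum : ∀ (μ : Fin n → Measure ℝ) (_ : ∀ j, IsProbabilityMeasure (μ j))
      (_ : ∀ j a, μ j {a} = 0) (_ : ∀ j, μ j (Set.Icc (0 : ℝ) xbar) = 1),
      ∑ j, (Measure.pi μ (laguerre xbar lam j)).toReal = 1 := by
    intro μ hprob hat hsupp
    have h1 : Measure.pi μ (⋃ j, laguerre xbar lam j) = 1 :=
      pi_union_laguerre xbar lam i μ hat hsupp
    rw [measure_iUnion (laguerre_disjoint xbar lam)
      (fun j => measurableSet_laguerre xbar lam j), tsum_fintype] at h1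
    have h2 := congrArg ENNReal.toReal h1
    rw [ENNReal.toReal_sum (fun j _ => measure_ne_top _ _), ENNReal.toReal_one] at h2
    exact h2
  have hFsum : ∑ j, pF j = 1 := hsum Fm inferInstance hFat hFsupp
  have hGsum : ∑ j, pG j = 1 := hsum Gm inferInstance hGat hGsupp
  have heq : ∑ j, max (pF j - pG j) 0 = ∑ j, max (pG j - pF j) 0 := by
    have h1 : ∑ j, (max (pF j - pG j) 0 - max (pG j - pF j) 0) = ∑ j, (pF j - pG j) := by
      refine Finset.sum_congr rfl fun j _ => ?_
      rw [show pG j - pF j = -(pF j - pG j) by ring]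
      exact max_zero_sub_max_neg_zero_eq_self _
    rw [Finset.sum_sub_distrib] at h1
    rw [Finset.sum_sub_distrib, hFsum, hGsum] at h1
    linarith
  refine ⟨heq, ?_⟩
  -- the main bound
  set S : Finset (Fin n) := Finset.univ.filter (fun j => pG j < pF j) with hS
  set U : Set (Fin n → ℝ) := ⋃ j ∈ S, laguerre xbar lam j with hU
  have hUmeas : MeasurableSet U :=
    S.measurableSet_biUnion (fun j _ => measurableSet_laguerre xbar lam j)
  have hrest : (fun j : {j : Fin n // j ≠ i} => Gm (j : Fin n)) =
      (fun j : {j : Fin n // j ≠ i} => Fm (j : Fin n)) :=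
    funext fun j => hGeq (j : Fin n) j.2
  have hkey : Measure.pi Fm U ≤ Measure.pi Gm U + ENNReal.ofReal Δ := by
    rw [pi_apply_split Fm i U hUmeas, pi_apply_split Gm i U hUmeas, hrest]
    calc ∫⁻ y : {j : Fin n // j ≠ i} → ℝ,
          (Fm i) {t : ℝ | (fun j => if h : j ≠ i then y ⟨j, h⟩ else t) ∈ U}
          ∂(Measure.pi fun j : {j : Fin n // j ≠ i} => Fm (j : Fin n))
        ≤ ∫⁻ y : {j : Fin n // j ≠ i} → ℝ,
          ((Gm i) {t : ℝ | (fun j => if h : j ≠ i then y ⟨j, h⟩ else t) ∈ U} + ENNReal.ofReal Δ)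
          ∂(Measure.pi fun j : {j : Fin n // j ≠ i} => Fm (j : Fin n)) := by
          refine lintegral_mono fun y => ?_
          exact sec_good hΔ0 lam i (Fm i) (Gm i) (hFsupp i) hGisupp hclose S y
      _ = ∫⁻ y : {j : Fin n // j ≠ i} → ℝ,
          (Gm i) {t : ℝ | (fun j => if h : j ≠ i then y ⟨j, h⟩ else t) ∈ U}
          ∂(Measure.pi fun j : {j : Fin n // j ≠ i} => Fm (j : Fin n)) + ENNReal.ofReal Δ := by
          rw [lintegral_add_right _ measurable_const, lintegral_const, measure_univ, mul_one]
  have hdisjS : Set.PairwiseDisjoint (↑S : Set (Fin n)) (fun j => laguerre xbar lam j) :=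
    fun a _ b _ hab => laguerre_disjoint xbar lam hab
  have hFU : (Measure.pi Fm U).toReal = ∑ j ∈ S, pF j := by
    rw [hU, measure_biUnion_finset hdisjS (fun j _ => measurableSet_laguerre xbar lam j)]
    rw [ENNReal.toReal_sum (fun j _ => measure_ne_top _ _)]
    rfl
  have hGU : (Measure.pi Gm U).toReal = ∑ j ∈ S, pG j := by
    rw [hU, measure_biUnion_finset hdisjS (fun j _ => measurableSet_laguerre xbar lam j)]
    rw [ENNReal.toReal_sum (fun j _ => measure_ne_top _ _)]
    rfl
  have hreal : (Measure.pi Fm U).toReal ≤ (Measure.pi Gm U).toReal + Δ := by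
    have h1 := ENNReal.toReal_mono (by
      exact ENNReal.add_ne_top.mpr ⟨measure_ne_top _ _, ENNReal.ofReal_ne_top⟩) hkey
    rwa [ENNReal.toReal_add (measure_ne_top _ _) ENNReal.ofReal_ne_top,
      ENNReal.toReal_ofReal hΔ0] at h1
  have hmax : ∑ j, max (pF j - pG j) 0 = ∑ j ∈ S, (pF j - pG j) := by
    rw [Finset.sum_filter]
    refine Finset.sum_congr rfl fun j _ => ?_
    by_cases h : pG j < pF j
    · rw [if_pos h, max_eq_left (by linarith)]
    · rw [if_neg h, max_eq_right (by push_neg at h; linarith)]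
  rw [hmax, Finset.sum_sub_distrib, ← hFU, ← hGU]
  linarith
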